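/- Let m, n, l ≥ 1, let H₁ ∈ ℂ^{n×m} and H₂ ∈ ℂ^{l×n}, and let P₁, P₂ > 0. Let C₁ be a finite nonempty set of unit vectors in ℂ^m and C₂ a finite nonempty set of unit vectors in ℂ^n. Define F(a, b) = ab/(1 + a + b) for a, b ≥ 0. Let b₁ ∈ ℂ^m be a unit vector attaining γ₁⋆ = sup{ P₁‖H₁s‖² : ‖s‖ = 1 }, let g₁ ∈ ℂ^n be a unit vector attaining γ₂⋆ = sup{ P₂‖H₂w‖² : ‖w‖ = 1 }, and set γ̃₁ = max_{w∈C₁} P₁‖H₁w‖² and γ̃₂ = max_{w∈C₂} P₂‖H₂w‖². Then F(γ₁⋆, γ₂⋆) − F(γ̃₁, γ̃₂) ≤ 2P₁‖H₁‖_F² · min_{w∈C₁} d(b₁, w) + 2P₂‖H₂‖_F² · min_{w∈C₂} d(g₁, w), where d(u, v) = √(1 − |uᴴv|²). -/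

import Mathlib

/-- Euclidean norm of a complex vector. -/
noncomputable def cnorm {k : ℕ} (v : Fin k → ℂ) : ℝ :=
  Real.sqrt (∑ i, ‖v i‖ ^ 2)

/-- Squared Frobenius norm of a complex matrix. -/
noncomputable def frobSq {p q : ℕ} (A : Matrix (Fin p) (Fin q) ℂ) : ℝ :=
  ∑ i, ∑ j, ‖A i j‖ ^ 2

/-- Chordal distance between complex vectors: `d(u,v) = √(1 − |uᴴv|²)`. -/
noncomputable def cdist {k : ℕ} (u v : Fin k → ℂ) : ℝ :=
  Real.sqrt (1 - ‖dotProduct (star u) v‖ ^ 2)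

/-- End-to-end two-hop relay SNR with hop SNRs `a`, `b`. -/
noncomputable def snrF (a b : ℝ) : ℝ := a * b / (1 + a + b)

set_option maxHeartbeats 1000000

noncomputable def toE {k : ℕ} (v : Fin k → ℂ) : EuclideanSpace ℂ (Fin k) :=
  (WithLp.equiv 2 _).symm v

lemma cnorm_eq {k : ℕ} (v : Fin k → ℂ) : cnorm v = ‖toE v‖ := by
  rw [EuclideanSpace.norm_eq]; rfl

lemma cnorm_nonneg {k : ℕ} (v : Fin k → ℂ) : 0 ≤ cnorm v := Real.sqrt_nonneg _

lemma dot_eq {k : ℕ} (u v : Fin k → ℂ) :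
    dotProduct (star u) v = inner ℂ (toE u) (toE v) := by
  rw [PiLp.inner_apply]
  simp [dotProduct, toE, RCLike.inner_apply]
  exact Finset.sum_congr rfl fun i _ => mul_comm _ _

lemma cnorm_smul {k : ℕ} (c : ℂ) (v : Fin k → ℂ) : cnorm (c • v) = ‖c‖ * cnorm v := by
  have : toE (c • v) = c • toE v := rfl
  rw [cnorm_eq, this, norm_smul, cnorm_eq]

lemma frobSq_nonneg {p q : ℕ} (A : Matrix (Fin p) (Fin q) ℂ) : 0 ≤ frobSq A := by
  unfold frobSq; positivity

/-- ‖Hx‖ ≤ ‖H‖_F ‖x‖. -/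
lemma mulVec_le_frob {p q : ℕ} (H : Matrix (Fin p) (Fin q) ℂ) (x : Fin q → ℂ) :
    cnorm (H.mulVec x) ≤ Real.sqrt (frobSq H) * cnorm x := by
  have hrow : ∀ i, ‖H.mulVec x i‖ ≤ Real.sqrt (∑ j, ‖H i j‖ ^ 2) * cnorm x := by
    intro i
    have h1 : H.mulVec x i = inner ℂ (toE (star (H i))) (toE x) := by
      rw [← dot_eq, star_star]; rfl
    have h2 := norm_inner_le_norm (𝕜 := ℂ) (toE (star (H i))) (toE x)
    have h4 : ‖toE (star (H i))‖ = Real.sqrt (∑ j, ‖H i j‖ ^ 2) := by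
      rw [← cnorm_eq]
      unfold cnorm
      congr 1
      exact Finset.sum_congr rfl fun j _ => by simp [Pi.star_apply]
    rw [h1]
    calc ‖(inner ℂ (toE (star (H i))) (toE x) : ℂ)‖ ≤ ‖toE (star (H i))‖ * ‖toE x‖ := h2
    _ = Real.sqrt (∑ j, ‖H i j‖ ^ 2) * cnorm x := by rw [h4, ← cnorm_eq]
  have hsum : ∑ i, ‖H.mulVec x i‖ ^ 2 ≤ frobSq H * cnorm x ^ 2 := by
    unfold frobSq
    rw [Finset.sum_mul]
    refine Finset.sum_le_sum fun i _ => ?_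
    have h3 : ‖H.mulVec x i‖ ^ 2 ≤ (Real.sqrt (∑ j, ‖H i j‖ ^ 2) * cnorm x) ^ 2 :=
      pow_le_pow_left₀ (norm_nonneg _) (hrow i) 2
    have hnn : (0:ℝ) ≤ ∑ j, ‖H i j‖ ^ 2 := by positivity
    calc ‖H.mulVec x i‖ ^ 2 ≤ (Real.sqrt (∑ j, ‖H i j‖ ^ 2) * cnorm x) ^ 2 := h3
    _ = (∑ j, ‖H i j‖ ^ 2) * cnorm x ^ 2 := by
        rw [mul_pow, Real.sq_sqrt hnn]
  have hx2 : (0:ℝ) ≤ frobSq H * cnorm x ^ 2 := by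
    have := frobSq_nonneg H
    positivity
  calc cnorm (H.mulVec x) = Real.sqrt (∑ i, ‖H.mulVec x i‖ ^ 2) := rfl
  _ ≤ Real.sqrt (frobSq H * cnorm x ^ 2) := Real.sqrt_le_sqrt hsum
  _ = Real.sqrt (frobSq H) * cnorm x := by
      rw [Real.sqrt_mul (frobSq_nonneg H), Real.sqrt_sq (cnorm_nonneg _)]

/-- Per-hop SNR loss bound. -/
lemma hop_loss {p q : ℕ} (H : Matrix (Fin p) (Fin q) ℂ) (P : ℝ) (hP : 0 < P)
    (b w : Fin q → ℂ) (hb : cnorm b = 1) (hw : cnorm w = 1)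
    (hmax : ∀ s : Fin q → ℂ, cnorm s = 1 →
      P * cnorm (H.mulVec s) ^ 2 ≤ P * cnorm (H.mulVec b) ^ 2) :
    P * cnorm (H.mulVec b) ^ 2 - P * cnorm (H.mulVec w) ^ 2
      ≤ 2 * P * frobSq H * cdist b w := by
  set σ := cnorm (H.mulVec b) with hσdef
  have hσ0 : 0 ≤ σ := cnorm_nonneg _
  -- the maximizing property extends to all vectors
  have hmax' : ∀ x : Fin q → ℂ, cnorm (H.mulVec x) ≤ σ * cnorm x := by
    intro x
    by_cases hx : cnorm x = 0
    · have hx0 : x = 0 := by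
        have : toE x = 0 := norm_eq_zero.mp (by rw [← cnorm_eq, hx])
        exact (WithLp.equiv 2 (Fin q → ℂ)).symm.injective (this.trans rfl)
      have h0p : cnorm (0 : Fin p → ℂ) = 0 := by unfold cnorm; simp
      have h0q : cnorm (0 : Fin q → ℂ) = 0 := by unfold cnorm; simp
      rw [hx0, Matrix.mulVec_zero, h0p, h0q, mul_zero]
    · have hxpos : 0 < cnorm x := lt_of_le_of_ne (cnorm_nonneg x) (Ne.symm hx)
      set s : Fin q → ℂ := ((cnorm x : ℂ)⁻¹) • x with hs
      have hsu : cnorm s = 1 := by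
        rw [hs, cnorm_smul, norm_inv]
        simp [Complex.norm_real, abs_of_pos hxpos]
        field_simp
      have h1 := hmax s hsu
      have h1' : cnorm (H.mulVec s) ^ 2 ≤ σ ^ 2 := le_of_mul_le_mul_left h1 hP
      have h2 : cnorm (H.mulVec s) ≤ σ :=
        (pow_le_pow_iff_left₀ (cnorm_nonneg _) hσ0 two_ne_zero).mp h1'
      have h3 : H.mulVec s = ((cnorm x : ℂ)⁻¹) • H.mulVec x := by
        rw [hs, Matrix.mulVec_smul]
      have h4 : cnorm (H.mulVec s) = (cnorm x)⁻¹ * cnorm (H.mulVec x) := by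
        rw [h3, cnorm_smul, norm_inv, Complex.norm_real, Real.norm_eq_abs,
          abs_of_pos hxpos]
      rw [h4] at h2
      calc cnorm (H.mulVec x) = (cnorm x)⁻¹ * cnorm (H.mulVec x) * cnorm x := by
            field_simp
      _ ≤ σ * cnorm x := by
          apply mul_le_mul_of_nonneg_right h2 (le_of_lt hxpos)
  -- σ² ≤ frobSq
  have hσF : σ ^ 2 ≤ frobSq H := by
    have := mulVec_le_frob H b
    rw [hb, mul_one, ← hσdef] at this
    have h5 : σ ^ 2 ≤ Real.sqrt (frobSq H) ^ 2 := pow_le_pow_left₀ hσ0 this 2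
    rwa [Real.sq_sqrt (frobSq_nonneg H)] at h5
  -- decomposition
  set c : ℂ := dotProduct (star b) w with hcdef
  have hcinner : c = inner ℂ (toE b) (toE w) := dot_eq b w
  have hbn : ‖toE b‖ = 1 := by rw [← cnorm_eq, hb]
  have hwn : ‖toE w‖ = 1 := by rw [← cnorm_eq, hw]
  have hc1 : ‖c‖ ≤ 1 := by
    rw [hcinner]
    calc ‖(inner ℂ (toE b) (toE w) : ℂ)‖ ≤ ‖toE b‖ * ‖toE w‖ := norm_inner_le_norm _ _
    _ = 1 := by rw [hbn, hwn, mul_one]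
  set z : Fin q → ℂ := w - c • b with hzdef
  have hzE : toE z = toE w - c • toE b := rfl
  have horth : (inner ℂ (toE b) (toE z) : ℂ) = 0 := by
    rw [hzE, inner_sub_right, inner_smul_right, ← hcinner,
      inner_self_eq_norm_sq_to_K, hbn]
    simp
  have hznorm : ‖toE z‖ ^ 2 = 1 - ‖c‖ ^ 2 := by
    have hsum : toE w = c • toE b + toE z := by rw [hzE]; abel
    have := norm_add_sq (𝕜 := ℂ) (c • toE b) (toE z)
    rw [← hsum, hwn] at this
    have hin : (inner ℂ (c • toE b) (toE z) : ℂ) = 0 := by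
      rw [inner_smul_left, horth, mul_zero]
    rw [hin] at this
    simp [norm_smul, hbn] at this
    linarith
  set d : ℝ := cdist b w with hddef
  have hd_eq : d = ‖toE z‖ := by
    rw [hddef]
    unfold cdist
    rw [← hcdef, ← hznorm, Real.sqrt_sq (norm_nonneg _)]
  have hd0 : 0 ≤ d := by rw [hd_eq]; exact norm_nonneg _
  have hd1 : d ^ 2 = 1 - ‖c‖ ^ 2 := by rw [hd_eq]; exact hznorm
  have hdle1 : d ≤ 1 := by nlinarith [norm_nonneg c, sq_nonneg (‖c‖)]
  -- lower bound on ‖Hw‖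
  set t : ℝ := cnorm (H.mulVec w) with htdef
  have ht0 : 0 ≤ t := cnorm_nonneg _
  have hlow : ‖c‖ * σ - σ * d ≤ t := by
    have hw' : w = c • b + z := by rw [hzdef]; abel
    have hdecomp : toE (H.mulVec w) = c • toE (H.mulVec b) + toE (H.mulVec z) := by
      show toE (H.mulVec w) = toE (c • H.mulVec b + H.mulVec z)
      rw [hw', Matrix.mulVec_add, Matrix.mulVec_smul]
    have h1 : ‖c • toE (H.mulVec b)‖ - ‖toE (H.mulVec z)‖ ≤ ‖toE (H.mulVec w)‖ := by
      rw [hdecomp]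
      simpa using norm_sub_norm_le (c • toE (H.mulVec b)) (-(toE (H.mulVec z)))
    have h2 : ‖c • toE (H.mulVec b)‖ = ‖c‖ * σ := by
      rw [norm_smul, ← cnorm_eq, hσdef]
    have h3 : ‖toE (H.mulVec z)‖ ≤ σ * d := by
      have h4 := hmax' z
      have hzc : cnorm z = d := by rw [cnorm_eq, hd_eq]
      rw [hzc, cnorm_eq] at h4
      exact h4
    have h5 : ‖toE (H.mulVec w)‖ = t := by rw [← cnorm_eq, htdef]
    rw [h2, h5] at h1
    linarith
  -- final computation
  have key : σ ^ 2 - t ^ 2 ≤ 2 * frobSq H * d := by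
    rcases le_or_gt d ‖c‖ with hcase | hcase
    · have h6 : σ * (‖c‖ - d) ≤ t := by nlinarith
      have h7 : 0 ≤ σ * (‖c‖ - d) := by
        apply mul_nonneg hσ0; linarith
      have h8 : (σ * (‖c‖ - d)) ^ 2 ≤ t ^ 2 := pow_le_pow_left₀ h7 h6 2
      have hd1' : σ ^ 2 * d ^ 2 = σ ^ 2 * (1 - ‖c‖ ^ 2) := by rw [hd1]
      nlinarith [h8, hd1', mul_nonneg (sub_nonneg.mpr hσF) hd0,
        mul_nonneg (mul_nonneg (sq_nonneg σ) hd0) (sub_nonneg.mpr hc1)]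
    · have h9 : 1 < 2 * d ^ 2 := by nlinarith [norm_nonneg c]
      nlinarith [frobSq_nonneg H, sq_nonneg t]
  have hfin := mul_le_mul_of_nonneg_left key hP.le
  nlinarith [hfin]

lemma snrF_comm (a b : ℝ) : snrF a b = snrF b a := by
  rw [snrF, snrF, mul_comm, add_right_comm]

lemma snrF_lip {a a' b : ℝ} (ha' : 0 ≤ a') (ha : a' ≤ a) (hb : 0 ≤ b) :
    snrF a b - snrF a' b ≤ a - a' := by
  have h1 : (0:ℝ) < 1 + a + b := by linarith
  have h2 : (0:ℝ) < 1 + a' + b := by linarith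
  rw [snrF, snrF, div_sub_div _ _ h1.ne' h2.ne', div_le_iff₀ (by positivity)]
  have he : 0 ≤ a - a' := sub_nonneg.mpr ha
  have ha0 : 0 ≤ a := ha'.trans ha
  nlinarith [he, mul_nonneg he hb, mul_nonneg he ha0, mul_nonneg he ha',
    mul_nonneg (mul_nonneg he ha0) ha', mul_nonneg (mul_nonneg he ha0) hb,
    mul_nonneg (mul_nonneg he ha') hb]

lemma snrF_sub_le {a a' b b' : ℝ} (ha' : 0 ≤ a') (hb' : 0 ≤ b')
    (ha : a' ≤ a) (hb : b' ≤ b) :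
    snrF a b - snrF a' b' ≤ (a - a') + (b - b') := by
  have t1 : snrF a b - snrF a' b ≤ a - a' := snrF_lip ha' ha (hb'.trans hb)
  have t2 : snrF a' b - snrF a' b' ≤ b - b' := by
    rw [snrF_comm a' b, snrF_comm a' b']
    exact snrF_lip hb' hb ha'
  linarith

/-- SNR loss bound for the quantized two-hop relay scheme without the direct link:
`F(γ₁⋆, γ₂⋆) − F(γ̃₁, γ̃₂) ≤ 2P₁‖H₁‖_F² min_{w∈C₁} d(b₁,w) + 2P₂‖H₂‖_F² min_{w∈C₂} d(g₁,w)`,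
where `b₁, g₁` are unit maximizers of the hop SNRs and `γ̃ᵢ` the best quantized hop SNRs. -/
theorem stmt17 (m n l : ℕ) (hm : 1 ≤ m) (hn : 1 ≤ n) (hl : 1 ≤ l)
    (H₁ : Matrix (Fin n) (Fin m) ℂ) (H₂ : Matrix (Fin l) (Fin n) ℂ)
    (P₁ P₂ : ℝ) (hP₁ : 0 < P₁) (hP₂ : 0 < P₂)
    (C₁ : Finset (Fin m → ℂ)) (hC₁ : C₁.Nonempty) (hC₁u : ∀ w ∈ C₁, cnorm w = 1)
    (C₂ : Finset (Fin n → ℂ)) (hC₂ : C₂.Nonempty) (hC₂u : ∀ w ∈ C₂, cnorm w = 1)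
    (b₁ : Fin m → ℂ) (hb₁u : cnorm b₁ = 1)
    (g₁ : Fin n → ℂ) (hg₁u : cnorm g₁ = 1)
    (hb₁ : ∀ s : Fin m → ℂ, cnorm s = 1 →
      P₁ * cnorm (H₁.mulVec s) ^ 2 ≤ P₁ * cnorm (H₁.mulVec b₁) ^ 2)
    (hg₁ : ∀ w : Fin n → ℂ, cnorm w = 1 →
      P₂ * cnorm (H₂.mulVec w) ^ 2 ≤ P₂ * cnorm (H₂.mulVec g₁) ^ 2) :
    snrF (P₁ * cnorm (H₁.mulVec b₁) ^ 2) (P₂ * cnorm (H₂.mulVec g₁) ^ 2) -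
      snrF (C₁.sup' hC₁ fun w => P₁ * cnorm (H₁.mulVec w) ^ 2)
        (C₂.sup' hC₂ fun w => P₂ * cnorm (H₂.mulVec w) ^ 2) ≤
    2 * P₁ * frobSq H₁ * (C₁.inf' hC₁ fun w => cdist b₁ w) +
      2 * P₂ * frobSq H₂ * (C₂.inf' hC₂ fun w => cdist g₁ w) := by
  set γ₁ := P₁ * cnorm (H₁.mulVec b₁) ^ 2 with hγ₁
  set γ₂ := P₂ * cnorm (H₂.mulVec g₁) ^ 2 with hγ₂
  set γ₁' := C₁.sup' hC₁ fun w => P₁ * cnorm (H₁.mulVec w) ^ 2 with hγ₁'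
  set γ₂' := C₂.sup' hC₂ fun w => P₂ * cnorm (H₂.mulVec w) ^ 2 with hγ₂'
  obtain ⟨w₁, hw₁mem, hw₁eq⟩ := C₁.exists_mem_eq_inf' hC₁ fun w => cdist b₁ w
  obtain ⟨w₂, hw₂mem, hw₂eq⟩ := C₂.exists_mem_eq_inf' hC₂ fun w => cdist g₁ w
  have hle₁ : P₁ * cnorm (H₁.mulVec w₁) ^ 2 ≤ γ₁' :=
    Finset.le_sup' (f := fun w => P₁ * cnorm (H₁.mulVec w) ^ 2) hw₁mem
  have hle₂ : P₂ * cnorm (H₂.mulVec w₂) ^ 2 ≤ γ₂' :=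
    Finset.le_sup' (f := fun w => P₂ * cnorm (H₂.mulVec w) ^ 2) hw₂mem
  have h0₁ : (0:ℝ) ≤ P₁ * cnorm (H₁.mulVec w₁) ^ 2 := by
    have := cnorm_nonneg (H₁.mulVec w₁); positivity
  have h0₂ : (0:ℝ) ≤ P₂ * cnorm (H₂.mulVec w₂) ^ 2 := by
    have := cnorm_nonneg (H₂.mulVec w₂); positivity
  have hγ₁'0 : 0 ≤ γ₁' := h0₁.trans hle₁
  have hγ₂'0 : 0 ≤ γ₂' := h0₂.trans hle₂
  have hγ₁le : γ₁' ≤ γ₁ := Finset.sup'_le _ _ fun w hw => hb₁ w (hC₁u w hw)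
  have hγ₂le : γ₂' ≤ γ₂ := Finset.sup'_le _ _ fun w hw => hg₁ w (hC₂u w hw)
  have hhop₁ : γ₁ - P₁ * cnorm (H₁.mulVec w₁) ^ 2 ≤ 2 * P₁ * frobSq H₁ * cdist b₁ w₁ :=
    hop_loss H₁ P₁ hP₁ b₁ w₁ hb₁u (hC₁u w₁ hw₁mem) hb₁
  have hhop₂ : γ₂ - P₂ * cnorm (H₂.mulVec w₂) ^ 2 ≤ 2 * P₂ * frobSq H₂ * cdist g₁ w₂ :=
    hop_loss H₂ P₂ hP₂ g₁ w₂ hg₁u (hC₂u w₂ hw₂mem) hg₁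
  have hmain : snrF γ₁ γ₂ - snrF γ₁' γ₂' ≤ (γ₁ - γ₁') + (γ₂ - γ₂') :=
    snrF_sub_le hγ₁'0 hγ₂'0 hγ₁le hγ₂le
  rw [hw₁eq, hw₂eq]
  have e₁ : γ₁ - γ₁' ≤ 2 * P₁ * frobSq H₁ * cdist b₁ w₁ := by linarith
  have e₂ : γ₂ - γ₂' ≤ 2 * P₂ * frobSq H₂ * cdist g₁ w₂ := by linarith
  calc snrF γ₁ γ₂ - snrF γ₁' γ₂' ≤ (γ₁ - γ₁') + (γ₂ - γ₂') := hmain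
  _ ≤ 2 * P₁ * frobSq H₁ * cdist b₁ w₁ + 2 * P₂ * frobSq H₂ * cdist g₁ w₂ := by
      linarith
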